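/- Let g be a finite-dimensional real Lie algebra with an invariant inner product, h a Lie subalgebra, m the orthogonal complement of h in g, and m = m_1 ⊕ … ⊕ m_k an orthogonal direct sum decomposition. Suppose [m_i, m_j] ⊆ h whenever i ≠ j. Then [m_i, m_i] ⊆ h + m_i for each i. -/

import Mathlib

/- Claim 2 in the proof of Theorem 3.5: with `B` an invariant inner product on `g`,
`h` a subalgebra, `m` its orthogonal complement and `m = m₁ ⊕ ⋯ ⊕ m_k` an
orthogonal decomposition, if `⁅m_i, m_j⁆ ⊆ h` for `i ≠ j` then
`⁅m_i, m_i⁆ ⊆ h + m_i` for each `i`. -/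
theorem statement_2
    {g : Type*} [LieRing g] [LieAlgebra ℝ g] [FiniteDimensional ℝ g]
    (B : g →ₗ[ℝ] g →ₗ[ℝ] ℝ)
    (hBsymm : ∀ x y : g, B x y = B y x)
    (hBpos : ∀ x : g, x ≠ 0 → 0 < B x x)
    (hBinv : ∀ x y z : g, B ⁅z, x⁆ y + B x ⁅z, y⁆ = 0)
    (h : LieSubalgebra ℝ g)
    (m : Submodule ℝ g)
    (hm : ∀ x : g, x ∈ m ↔ ∀ y ∈ h, B x y = 0)
    (k : ℕ) (mi : Fin k → Submodule ℝ g)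
    (hsup : ⨆ i, mi i = m)
    (horth : ∀ i j, i ≠ j → ∀ x ∈ mi i, ∀ y ∈ mi j, B x y = 0)
    (hij : ∀ i j, i ≠ j → ∀ x ∈ mi i, ∀ y ∈ mi j, ⁅x, y⁆ ∈ h) :
    ∀ i, ∀ x ∈ mi i, ∀ y ∈ mi i, ⁅x, y⁆ ∈ h.toSubmodule ⊔ mi i := by
  intro i x hx y hy
  -- `m` is the orthogonal complement of `h` w.r.t. the bilinear form `B`
  have hmorth : m = LinearMap.BilinForm.orthogonal B h.toSubmodule := by
    ext u
    rw [hm]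
    constructor
    · intro hu v hv
      show B v u = 0
      rw [hBsymm]; exact hu v hv
    · intro hu v hv
      have : B v u = 0 := hu v hv
      rw [hBsymm]; exact this
  have hrefl : (B : LinearMap.BilinForm ℝ g).IsRefl := by
    intro a b hab; rw [hBsymm]; exact hab
  have hnd : (LinearMap.BilinForm.restrict B h.toSubmodule).Nondegenerate := by
    refine ((hrefl.domRestrict h.toSubmodule).nondegenerate_iff_separatingLeft).mpr ?_
    intro ⟨a, ha⟩ hA
    ext
    by_contra ha0
    have := hBpos a ha0
    have := hA ⟨a, ha⟩
    change B a a = 0 at this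
    linarith
  have hcompl : IsCompl h.toSubmodule m := by
    rw [hmorth]
    exact LinearMap.BilinForm.isCompl_orthogonal_of_restrict_nondegenerate hrefl hnd
  -- decompose z = ⁅x, y⁆ as a + u with a ∈ h, u ∈ m
  have hz : (⁅x, y⁆ : g) ∈ h.toSubmodule ⊔ m := by
    rw [hcompl.sup_eq_top]; trivial
  obtain ⟨a, ha, u, hu, hz⟩ := Submodule.mem_sup.mp hz
  -- decompose u = ∑ f j with f j ∈ mi j
  rw [← hsup, Submodule.mem_iSup_iff_exists_finsupp] at hu
  obtain ⟨f, hf, hfsum⟩ := hu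
  classical
  have hfsum' : ∑ j, f j = u := by
    rw [← hfsum, Finsupp.sum]
    exact (Finset.sum_subset (Finset.subset_univ _) (by simp)).symm
  set n : g := ∑ j ∈ Finset.univ.erase i, f j with hn
  have hws : (⁅x, y⁆ : g) = (a + f i) + n := by
    rw [← hz, ← hfsum', ← Finset.add_sum_erase _ _ (Finset.mem_univ i)]
    rw [hn, add_assoc]
  -- x, y ∈ m
  have hxm : x ∈ m := by rw [← hsup]; exact Submodule.mem_iSup_of_mem i hx
  have hym : y ∈ m := by rw [← hsup]; exact Submodule.mem_iSup_of_mem i hy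
  -- ⁅x,y⁆ is orthogonal to each f j, j ≠ i
  have hzn : ∀ j ∈ Finset.univ.erase i, B ⁅x, y⁆ (f j) = 0 := by
    intro j hj
    have hji : j ≠ i := (Finset.mem_erase.mp hj).1
    have h1 := hBinv y (f j) x
    have h2 : ⁅x, f j⁆ ∈ h := hij i j (Ne.symm hji) x hx (f j) (hf j)
    have h3 : B y ⁅x, f j⁆ = 0 := (hm y).mp hym _ h2
    linarith
  -- (a + f i) is orthogonal to each f j, j ≠ i
  have hwn : ∀ j ∈ Finset.univ.erase i, B (a + f i) (f j) = 0 := by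
    intro j hj
    have hji : j ≠ i := (Finset.mem_erase.mp hj).1
    have hfjm : f j ∈ m := by rw [← hsup]; exact Submodule.mem_iSup_of_mem j (hf j)
    have h1 : B a (f j) = 0 := by rw [hBsymm]; exact (hm _).mp hfjm a ha
    have h2 : B (f i) (f j) = 0 := horth i j (Ne.symm hji) (f i) (hf i) (f j) (hf j)
    simp [h1, h2]
  -- hence n is orthogonal to itself, so n = 0
  have hnn : B n n = 0 := by
    have h1 : B ⁅x, y⁆ n = 0 := by
      rw [hn, map_sum]
      exact Finset.sum_eq_zero hzn
    have h2 : B (a + f i) n = 0 := by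
      rw [hn, map_sum]
      exact Finset.sum_eq_zero hwn
    have : B ⁅x, y⁆ n = B (a + f i) n + B n n := by
      rw [hws]; simp
    rw [h1, h2] at this
    linarith
  have hn0 : n = 0 := by
    by_contra h0
    exact absurd hnn (ne_of_gt (hBpos n h0))
  rw [hws, hn0, add_zero]
  exact Submodule.add_mem_sup ha (hf i)
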